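/- (Corollaries 6.10 and 6.12: basis-independence of the trace class.) Let U : H →L[K] H be unitary (surjective, isometric, inner-product-preserving), so that {U (e n)}ₙ is an orthonormal basis of H, and let T : H →L[K] H be of trace class. Then the matrix of T with respect to the new basis also vanishes along the cofinite filter: Tendsto (fun q : ℕ × ℕ => ⟪U (e q.1), T (U (e q.2))⟫) Filter.cofinite (nhds 0). -/

import Mathlib

open Filter Topology

noncomputable section

variable (K : Type*) [NontriviallyNormedField K] [IsUltrametricDist K]
  [CompleteSpace K] [StarRing K] [NormedStarGroup K]

/-- The p-adic coordinate Hilbert space: zero-convergent sequences in `K` with sup norm. -/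
abbrev H := ZeroAtInftyContinuousMap ℕ K

/-- The standard basis vectors of `H K`. -/
def e (n : ℕ) : H K where
  toFun := fun m => if m = n then 1 else 0
  continuous_toFun := continuous_of_discreteTopology
  zero_at_infty' := by
    rw [cocompact_eq_atTop]
    refine Filter.Tendsto.congr' ?_ tendsto_const_nhds
    filter_upwards [Filter.eventually_gt_atTop n] with m hm
    simp [Nat.ne_of_gt hm]

/-- The canonical inner product on `H K`: `⟪x, y⟫ = ∑' i, star (x i) * y i`. -/
def inner' (x y : H K) : K := ∑' i, star (x i) * y i

/-- A bounded operator is of trace class if its matrix entries vanish along the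
cofinite filter of `ℕ × ℕ`. -/
def IsTraceClass (T : H K →L[K] H K) : Prop :=
  Tendsto (fun q : ℕ × ℕ => (T (e K q.2)) q.1) Filter.cofinite (nhds 0)

set_option linter.unusedSectionVars false

namespace Scratch

variable {K}

lemma e_apply (n m : ℕ) : e K n m = if m = n then 1 else 0 := rfl

lemma norm_apply_le (x : H K) (k : ℕ) : ‖x k‖ ≤ ‖x‖ := by
  rw [← ZeroAtInftyContinuousMap.norm_toBCF_eq_norm]
  exact x.toBCF.norm_coe_le_norm k

lemma norm_e_le (n : ℕ) : ‖e K n‖ ≤ 1 := by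
  rw [← ZeroAtInftyContinuousMap.norm_toBCF_eq_norm]
  refine BoundedContinuousFunction.norm_le zero_le_one |>.mpr fun m => ?_
  show ‖e K n m‖ ≤ 1
  rw [e_apply]
  split <;> simp

instance : IsUltrametricDist (H K) := by
  constructor
  intro f g h
  rw [← ZeroAtInftyContinuousMap.dist_toBCF_eq_dist,
    BoundedContinuousFunction.dist_le (by positivity)]
  intro x
  refine (IsUltrametricDist.dist_triangle_max (f x) (g x) (h x)).trans (max_le_max ?_ ?_)
  · calc dist (f x) (g x) = dist (f.toBCF x) (g.toBCF x) := rfl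
    _ ≤ dist f.toBCF g.toBCF := BoundedContinuousFunction.dist_coe_le_dist x
    _ = dist f g := ZeroAtInftyContinuousMap.dist_toBCF_eq_dist
  · calc dist (g x) (h x) = dist (g.toBCF x) (h.toBCF x) := rfl
    _ ≤ dist g.toBCF h.toBCF := BoundedContinuousFunction.dist_coe_le_dist x
    _ = dist g h := ZeroAtInftyContinuousMap.dist_toBCF_eq_dist

def ev (k : ℕ) : H K →L[K] K :=
  LinearMap.mkContinuous
    { toFun := fun x => x k
      map_add' := fun x y => rfl
      map_smul' := fun c x => rfl }
    1 (fun x => by simpa using norm_apply_le x k)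

lemma ev_apply (k : ℕ) (x : H K) : ev k x = x k := rfl

lemma hasSum_coeff (x : H K) : HasSum (fun l => x l • e K l) x := by
  have hten : Tendsto (fun l => x l • e K l) cofinite (𝓝 (0 : H K)) := by
    refine squeeze_zero_norm (fun l => ?_) (?_ : Tendsto (fun l => ‖x l‖) cofinite (𝓝 0))
    · refine (norm_smul_le (x l) (e K l)).trans ?_
      exact mul_le_of_le_one_right (norm_nonneg _) (norm_e_le l)
    · have := x.zero_at_infty'
      rw [cocompact_eq_atTop] at this
      rw [Nat.cofinite_eq_atTop]
      simpa using this.norm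
  have hs : Summable (fun l => x l • e K l) :=
    NonarchimedeanAddGroup.summable_of_tendsto_cofinite_zero hten
  obtain ⟨y, hy⟩ := hs
  suffices h : y = x from h ▸ hy
  ext k
  have h2 := (hy.mapL (ev (K := K) k)).tsum_eq
  rw [show (fun l => ev (K := K) k (x l • e K l)) = fun l => x l * (if k = l then 1 else 0)
    from rfl] at h2
  rw [tsum_eq_single k (fun b hb => by simp [Ne.symm hb])] at h2
  simpa [ev_apply] using h2.symm

lemma apply_eq_tsum (T : H K →L[K] H K) (x : H K) (k : ℕ) :
    (T x) k = ∑' l, x l * (T (e K l)) k := by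
  have h := ((hasSum_coeff x).mapL T).mapL (ev (K := K) k)
  have h2 : (fun l => ev (K := K) k (T (x l • e K l))) = fun l => x l * (T (e K l)) k := by
    funext l
    simp [ev_apply, map_smul, smul_eq_mul]
  rw [h2] at h
  exact h.tsum_eq.symm

lemma inner'_e_left (k : ℕ) (y : H K) : inner' K (e K k) y = y k := by
  unfold inner'
  rw [tsum_eq_single k (fun b hb => by simp [e_apply, hb])]
  simp [e_apply]

lemma inner'_e_right (x : H K) (i : ℕ) : inner' K x (e K i) = star (x i) := by
  unfold inner'
  rw [tsum_eq_single i (fun b hb => by simp [e_apply, hb])]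
  simp [e_apply]

end Scratch

namespace Scratch

lemma coeff_tendsto (U : H K →L[K] H K) (hUsurj : Function.Surjective U)
    (hUip : ∀ x y : H K, inner' K (U x) (U y) = inner' K x y) (k : ℕ) :
    Tendsto (fun i => (U (e K i)) k) cofinite (𝓝 (0 : K)) := by
  obtain ⟨x, hx⟩ := hUsurj (e K k)
  have h1 : ∀ i, (U (e K i)) k = star (x i) := fun i => by
    rw [← inner'_e_left k (U (e K i)), ← hx, hUip, inner'_e_right]
  simp only [h1]
  have h0 := x.zero_at_infty'
  rw [cocompact_eq_atTop] at h0
  rw [Nat.cofinite_eq_atTop]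
  have h2 : Tendsto (fun i => star (x i)) atTop (𝓝 (star (0 : K))) :=
    (continuous_star.tendsto 0).comp h0
  simpa using h2

end Scratch


open Scratch in
theorem Scratch.key (U T : H K →L[K] H K)
    (hUsurj : Function.Surjective U) (hUiso : ∀ x : H K, ‖U x‖ = ‖x‖)
    (hUip : ∀ x y : H K, inner' K (U x) (U y) = inner' K x y)
    (hT : Tendsto (fun q : ℕ × ℕ => (T (e K q.2)) q.1) Filter.cofinite (nhds 0)) :
    Tendsto (fun q : ℕ × ℕ => inner' K (U (e K q.1)) (T (U (e K q.2))))
      Filter.cofinite (nhds 0) := by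
  rw [Metric.tendsto_nhds]
  intro ε hε
  set ε2 := ε / 2 with hε2def
  have hε2 : 0 < ε2 := by positivity
  set C := max ‖T‖ 1 with hCdef
  have hC : (0 : ℝ) < C := lt_of_lt_of_le one_pos (le_max_right _ _)
  set δ := ε2 / C with hδdef
  have hδ : 0 < δ := by positivity
  have hδC : δ * C = ε2 := div_mul_cancel₀ _ hC.ne'
  have hA : ∀ i k : ℕ, ‖(U (e K i)) k‖ ≤ 1 := fun i k =>
    (norm_apply_le _ k).trans (by rw [hUiso]; exact norm_e_le i)
  have hTb : ∀ k l : ℕ, ‖(T (e K l)) k‖ ≤ C := fun k l =>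
    (norm_apply_le _ k).trans ((T.le_opNorm _).trans (by
      calc ‖T‖ * ‖e K l‖ ≤ ‖T‖ * 1 := by gcongr; exact norm_e_le l
      _ = ‖T‖ := mul_one _
      _ ≤ C := le_max_left _ _))
  have hF : ∀ᶠ p : ℕ × ℕ in cofinite, ‖(T (e K p.2)) p.1‖ < ε2 := by
    have := Metric.tendsto_nhds.mp hT ε2 hε2
    simpa [dist_zero_right] using this
  have hFfin := Filter.eventually_cofinite.mp hF
  set Fs := hFfin.toFinset with hFs
  set Ks := Fs.image Prod.fst with hKs
  set Ls := Fs.image Prod.snd with hLs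
  have hI : ∀ᶠ i in (cofinite : Filter ℕ), ∀ k ∈ Ks, ‖(U (e K i)) k‖ < δ := by
    rw [Filter.eventually_all_finset]
    intro k _
    have := Metric.tendsto_nhds.mp (coeff_tendsto K U hUsurj hUip k) δ hδ
    simpa [dist_zero_right] using this
  have hJ : ∀ᶠ j in (cofinite : Filter ℕ), ∀ l ∈ Ls, ‖(U (e K j)) l‖ < δ := by
    rw [Filter.eventually_all_finset]
    intro l _
    have := Metric.tendsto_nhds.mp (coeff_tendsto K U hUsurj hUip l) δ hδ
    simpa [dist_zero_right] using this
  have hIJ : ∀ᶠ q : ℕ × ℕ in cofinite,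
      (∀ k ∈ Ks, ‖(U (e K q.1)) k‖ < δ) ∨ (∀ l ∈ Ls, ‖(U (e K q.2)) l‖ < δ) := by
    rw [Filter.eventually_cofinite]
    refine Set.Finite.subset
      ((Filter.eventually_cofinite.mp hI).prod (Filter.eventually_cofinite.mp hJ)) ?_
    intro q hq
    simp only [Set.mem_setOf_eq, not_or] at hq
    exact ⟨hq.1, hq.2⟩
  filter_upwards [hIJ] with q hq
  rw [dist_zero_right]
  refine lt_of_le_of_lt ?_ (by rw [hε2def]; linarith : ε2 < ε)
  show ‖∑' k, star ((U (e K q.1)) k) * (T (U (e K q.2))) k‖ ≤ ε2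
  refine IsUltrametricDist.norm_tsum_le_of_forall_le_of_nonneg hε2.le fun k => ?_
  rw [apply_eq_tsum T (U (e K q.2)) k, ← tsum_mul_left]
  refine IsUltrametricDist.norm_tsum_le_of_forall_le_of_nonneg hε2.le fun l => ?_
  have hb : ‖star ((U (e K q.1)) k) * ((U (e K q.2)) l * (T (e K l)) k)‖
      ≤ ‖(U (e K q.1)) k‖ * (‖(U (e K q.2)) l‖ * ‖(T (e K l)) k‖) := by
    refine (norm_mul_le _ _).trans ?_
    rw [norm_star]
    exact mul_le_mul_of_nonneg_left (norm_mul_le _ _) (norm_nonneg _)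
  refine hb.trans ?_
  by_cases hkl : (k, l) ∈ Fs
  · have hk : k ∈ Ks := Finset.mem_image.mpr ⟨(k, l), hkl, rfl⟩
    have hl : l ∈ Ls := Finset.mem_image.mpr ⟨(k, l), hkl, rfl⟩
    rcases hq with hq | hq
    · calc ‖(U (e K q.1)) k‖ * (‖(U (e K q.2)) l‖ * ‖(T (e K l)) k‖)
          ≤ δ * (1 * C) := by
            gcongr
            · exact (hq k hk).le
            · exact hA _ _
            · exact hTb _ _
      _ = ε2 := by rw [one_mul, hδC]
    · calc ‖(U (e K q.1)) k‖ * (‖(U (e K q.2)) l‖ * ‖(T (e K l)) k‖)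
          ≤ 1 * (δ * C) := by
            gcongr
            · exact hA _ _
            · exact (hq l hl).le
            · exact hTb _ _
      _ = ε2 := by rw [one_mul, hδC]
  · have ht : ‖(T (e K l)) k‖ ≤ ε2 := by
      have := hkl
      rw [hFs, Set.Finite.mem_toFinset] at this
      simp only [Set.mem_setOf_eq, not_not] at this
      exact this.le
    calc ‖(U (e K q.1)) k‖ * (‖(U (e K q.2)) l‖ * ‖(T (e K l)) k‖)
        ≤ 1 * (1 * ε2) := by
          gcongr
          · exact hA _ _
          · exact hA _ _
    _ = ε2 := by rw [one_mul, one_mul]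

/-- The trace class does not depend on the orthonormal basis: the matrix of a trace class
operator w.r.t. any unitary image of the standard basis vanishes along the cofinite filter. -/
theorem stmt10 (U T : H K →L[K] H K)
    (hUsurj : Function.Surjective U) (hUiso : ∀ x : H K, ‖U x‖ = ‖x‖)
    (hUip : ∀ x y : H K, inner' K (U x) (U y) = inner' K x y)
    (hT : IsTraceClass K T) :
    Tendsto (fun q : ℕ × ℕ => inner' K (U (e K q.1)) (T (U (e K q.2))))
      Filter.cofinite (nhds 0) := by
  unfold IsTraceClass at hT
  exact Scratch.key K U T hUsurj hUiso hUip hT
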